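/- For s₁, s₂, s₃ ∈ {0,1} and any complex V, the function exp(V s₁s₂s₃) can be written as a 1-layer RBM function of (s₁,s₂,s₃) with at most 5 hidden {0,1}-valued spins (i.e., there exist complex weights W ∈ ℂ^{3×5}, visible biases a ∈ ℂ³, hidden biases b ∈ ℂ⁵, and a constant c ∈ ℂ such that exp(V s₁s₂s₃) = e^c ∑_{h∈{0,1}⁵} exp(∑ W_{ij}s_i h_j + ∑ a_i s_i + ∑ b_j h_j) for all s ∈ {0,1}³). -/

import Mathlib

/-- The value in `ℂ` of a `{0,1}`-valued spin. -/
def spinVal (x : Bool) : ℂ := if x then 1 else 0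

lemma spinVal_true : spinVal true = 1 := rfl
lemma spinVal_false : spinVal false = 0 := rfl

lemma sum_spin (t0 t1 t2 t3 t4 : ℂ) :
    ∑ h : Fin 5 → Bool, Complex.exp (t0 * spinVal (h 0) + t1 * spinVal (h 1) +
        t2 * spinVal (h 2) + t3 * spinVal (h 3) + t4 * spinVal (h 4)) =
      (1 + Complex.exp t0) * (1 + Complex.exp t1) * (1 + Complex.exp t2) *
        (1 + Complex.exp t3) * (1 + Complex.exp t4) := by
  calc ∑ h : Fin 5 → Bool, Complex.exp (t0 * spinVal (h 0) + t1 * spinVal (h 1) +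
        t2 * spinVal (h 2) + t3 * spinVal (h 3) + t4 * spinVal (h 4))
      = ∑ h : Fin 5 → Bool, ∏ j : Fin 5,
          Complex.exp (![t0, t1, t2, t3, t4] j * spinVal (h j)) := by
        refine Finset.sum_congr rfl fun h _ => ?_
        rw [Fin.prod_univ_five]
        simp only [Matrix.cons_val_zero, Matrix.cons_val_one, Matrix.head_cons,
          Matrix.cons_val_two, Matrix.tail_cons, Matrix.cons_val_three, Matrix.cons_val_four,
          ← Complex.exp_add]
    _ = ∏ j : Fin 5, ∑ x : Bool, Complex.exp (![t0, t1, t2, t3, t4] j * spinVal x) :=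
        (Fintype.prod_sum (κ := fun _ : Fin 5 => Bool)
          (fun j x => Complex.exp (![t0, t1, t2, t3, t4] j * spinVal x))).symm
    _ = (1 + Complex.exp t0) * (1 + Complex.exp t1) * (1 + Complex.exp t2) *
        (1 + Complex.exp t3) * (1 + Complex.exp t4) := by
        rw [Fin.prod_univ_five]
        simp only [Matrix.cons_val_zero, Matrix.cons_val_one, Matrix.head_cons,
          Matrix.cons_val_two, Matrix.tail_cons, Matrix.cons_val_three, Matrix.cons_val_four,
          Fintype.sum_bool, spinVal_true, spinVal_false, mul_one, mul_zero, Complex.exp_zero]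
        ring

lemma rbm_eval (w₁ w₂ w₃ α β₁ β₂ β₃ s₁ s₂ s₃ : ℂ) :
    ∑ h : Fin 5 → Bool, Complex.exp (
        (w₁ * s₁ + w₁ * s₂ + w₁ * s₃) * spinVal (h 0) +
        (w₂ * s₁ + w₂ * s₂ + w₂ * s₃) * spinVal (h 1) +
        (w₃ * s₁ + w₃ * s₂ + w₃ * s₃) * spinVal (h 2) +
        (0 * s₁ + 0 * s₂ + 0 * s₃) * spinVal (h 3) +
        (0 * s₁ + 0 * s₂ + 0 * s₃) * spinVal (h 4) +
        α * s₁ + α * s₂ + α * s₃ +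
        (β₁ * spinVal (h 0) + β₂ * spinVal (h 1) + β₃ * spinVal (h 2) +
          0 * spinVal (h 3) + 0 * spinVal (h 4))) =
      Complex.exp (α * (s₁ + s₂ + s₃)) *
        ((1 + Complex.exp (w₁ * (s₁ + s₂ + s₃) + β₁)) *
         (1 + Complex.exp (w₂ * (s₁ + s₂ + s₃) + β₂)) *
         (1 + Complex.exp (w₃ * (s₁ + s₂ + s₃) + β₃)) * 4) := by
  calc ∑ h : Fin 5 → Bool, Complex.exp (
        (w₁ * s₁ + w₁ * s₂ + w₁ * s₃) * spinVal (h 0) +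
        (w₂ * s₁ + w₂ * s₂ + w₂ * s₃) * spinVal (h 1) +
        (w₃ * s₁ + w₃ * s₂ + w₃ * s₃) * spinVal (h 2) +
        (0 * s₁ + 0 * s₂ + 0 * s₃) * spinVal (h 3) +
        (0 * s₁ + 0 * s₂ + 0 * s₃) * spinVal (h 4) +
        α * s₁ + α * s₂ + α * s₃ +
        (β₁ * spinVal (h 0) + β₂ * spinVal (h 1) + β₃ * spinVal (h 2) +
          0 * spinVal (h 3) + 0 * spinVal (h 4)))
      = ∑ h : Fin 5 → Bool, Complex.exp (α * (s₁ + s₂ + s₃)) *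
          Complex.exp ((w₁ * (s₁ + s₂ + s₃) + β₁) * spinVal (h 0) +
            (w₂ * (s₁ + s₂ + s₃) + β₂) * spinVal (h 1) +
            (w₃ * (s₁ + s₂ + s₃) + β₃) * spinVal (h 2) +
            0 * spinVal (h 3) + 0 * spinVal (h 4)) := by
        refine Finset.sum_congr rfl fun h _ => ?_
        rw [← Complex.exp_add]
        congr 1
        ring
    _ = Complex.exp (α * (s₁ + s₂ + s₃)) * ∑ h : Fin 5 → Bool,
          Complex.exp ((w₁ * (s₁ + s₂ + s₃) + β₁) * spinVal (h 0) +
            (w₂ * (s₁ + s₂ + s₃) + β₂) * spinVal (h 1) +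
            (w₃ * (s₁ + s₂ + s₃) + β₃) * spinVal (h 2) +
            0 * spinVal (h 3) + 0 * spinVal (h 4)) := by
        rw [Finset.mul_sum]
    _ = Complex.exp (α * (s₁ + s₂ + s₃)) *
          ((1 + Complex.exp (w₁ * (s₁ + s₂ + s₃) + β₁)) *
           (1 + Complex.exp (w₂ * (s₁ + s₂ + s₃) + β₂)) *
           (1 + Complex.exp (w₃ * (s₁ + s₂ + s₃) + β₃)) *
           (1 + Complex.exp 0) * (1 + Complex.exp 0)) := by
        rw [sum_spin]
    _ = _ := by rw [Complex.exp_zero]; ring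

lemma key (V A C y v z : ℂ) (hA : A ≠ 0) (hy : y ≠ 0) (hv : v ≠ 0) (hz : z ≠ 0) (hC : C ≠ 0)
    (h0 : C * ((1 + y) * (1 + v) * (1 + z)) = 1)
    (h1 : C * A * ((1 + Complex.I * y) * (1 - v) * (1 - Complex.I * z)) = 1)
    (h2 : C * A ^ 2 * ((1 - y) * (1 + v) * (1 - z)) = 1)
    (h3 : C * A ^ 3 * ((1 - Complex.I * y) * (1 - v) * (1 + Complex.I * z)) = Complex.exp V) :
    ∃ (W : Fin 3 → Fin 5 → ℂ) (a : Fin 3 → ℂ) (b : Fin 5 → ℂ) (c : ℂ),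
      ∀ s₁ s₂ s₃ : ℂ, s₁ ∈ ({0, 1} : Set ℂ) → s₂ ∈ ({0, 1} : Set ℂ) →
        s₃ ∈ ({0, 1} : Set ℂ) →
        Complex.exp (V * s₁ * s₂ * s₃) =
          Complex.exp c * ∑ h : Fin 5 → Bool,
            Complex.exp (
              (W 0 0 * s₁ + W 1 0 * s₂ + W 2 0 * s₃) * spinVal (h 0) +
              (W 0 1 * s₁ + W 1 1 * s₂ + W 2 1 * s₃) * spinVal (h 1) +
              (W 0 2 * s₁ + W 1 2 * s₂ + W 2 2 * s₃) * spinVal (h 2) +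
              (W 0 3 * s₁ + W 1 3 * s₂ + W 2 3 * s₃) * spinVal (h 3) +
              (W 0 4 * s₁ + W 1 4 * s₂ + W 2 4 * s₃) * spinVal (h 4) +
              a 0 * s₁ + a 1 * s₂ + a 2 * s₃ + ∑ j, b j * spinVal (h j)) := by
  refine ⟨fun _ => ![Complex.log Complex.I, Complex.log (-1), Complex.log (-Complex.I), 0, 0],
    fun _ => Complex.log A, ![Complex.log y, Complex.log v, Complex.log z, 0, 0],
    Complex.log (C / 4), ?_⟩
  intro s₁ s₂ s₃ hs₁ hs₂ hs₃
  simp only [Set.mem_insert_iff, Set.mem_singleton_iff] at hs₁ hs₂ hs₃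
  simp only [Fin.sum_univ_five, Matrix.cons_val_zero, Matrix.cons_val_one, Matrix.head_cons,
    Matrix.cons_val_two, Matrix.tail_cons, Matrix.cons_val_three, Matrix.cons_val_four]
  rw [rbm_eval]
  have eI : Complex.exp (Complex.log Complex.I) = Complex.I :=
    Complex.exp_log Complex.I_ne_zero
  have em : Complex.exp (Complex.log (-1)) = -1 := Complex.exp_log (by norm_num)
  have emI : Complex.exp (Complex.log (-Complex.I)) = -Complex.I :=
    Complex.exp_log (neg_ne_zero.mpr Complex.I_ne_zero)
  have ey : Complex.exp (Complex.log y) = y := Complex.exp_log hy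
  have ev : Complex.exp (Complex.log v) = v := Complex.exp_log hv
  have ez : Complex.exp (Complex.log z) = z := Complex.exp_log hz
  have eA : Complex.exp (Complex.log A) = A := Complex.exp_log hA
  have eC : Complex.exp (Complex.log (C / 4)) = C / 4 :=
    Complex.exp_log (div_ne_zero hC (by norm_num))
  have pw0 : ∀ w b u : ℂ, Complex.exp b = u → Complex.exp (w * 0 + b) = u := by
    intro w b u hu
    rw [show w * 0 + b = b by ring, hu]
  have pw1 : ∀ w x b u : ℂ, Complex.exp w = x → Complex.exp b = u →
      Complex.exp (w * 1 + b) = x * u := by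
    intro w x b u hx hu
    rw [show w * 1 + b = w + b by ring, Complex.exp_add, hx, hu]
  have pw2 : ∀ w x x2 b u : ℂ, Complex.exp w = x → x * x = x2 → Complex.exp b = u →
      Complex.exp (w * 2 + b) = x2 * u := by
    intro w x x2 b u hx hx2 hu
    rw [show w * 2 + b = w + (w + b) by ring, Complex.exp_add, Complex.exp_add, hx, hu,
      ← mul_assoc, hx2]
  have pw3 : ∀ w x x3 b u : ℂ, Complex.exp w = x → x * (x * x) = x3 → Complex.exp b = u →
      Complex.exp (w * 3 + b) = x3 * u := by
    intro w x x3 b u hx hx3 hu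
    rw [show w * 3 + b = w + (w + (w + b)) by ring, Complex.exp_add, Complex.exp_add,
      Complex.exp_add, hx, hu, show x * (x * (x * u)) = (x * (x * x)) * u by ring, hx3]
  have pA0 : Complex.exp (Complex.log A * 0) = 1 := by rw [mul_zero, Complex.exp_zero]
  have pA1 : Complex.exp (Complex.log A * 1) = A := by rw [mul_one, eA]
  have pA2 : Complex.exp (Complex.log A * 2) = A * A := by
    rw [show Complex.log A * 2 = Complex.log A + Complex.log A by ring, Complex.exp_add, eA]
  have pA3 : Complex.exp (Complex.log A * 3) = A * (A * A) := by
    rw [show Complex.log A * 3 = Complex.log A + (Complex.log A + Complex.log A) by ring,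
      Complex.exp_add, Complex.exp_add, eA]
  have hII : Complex.I * Complex.I = -1 := Complex.I_mul_I
  have hmm : (-1 : ℂ) * (-1 : ℂ) = 1 := by norm_num
  have hmII : (-Complex.I) * (-Complex.I) = -1 := by rw [neg_mul_neg, Complex.I_mul_I]
  have hI3 : Complex.I * (Complex.I * Complex.I) = -Complex.I := by
    rw [Complex.I_mul_I]; ring
  have hm3 : (-1 : ℂ) * ((-1 : ℂ) * (-1 : ℂ)) = -1 := by norm_num
  have hmI3 : (-Complex.I) * ((-Complex.I) * (-Complex.I)) = Complex.I := by
    rw [neg_mul_neg, Complex.I_mul_I]; ring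
  obtain ⟨hk, hp⟩ | ⟨hk, hp⟩ | ⟨hk, hp⟩ | ⟨hk, hp⟩ :
      (s₁ + s₂ + s₃ = 0 ∧ Complex.exp (V * s₁ * s₂ * s₃) = 1) ∨
      (s₁ + s₂ + s₃ = 1 ∧ Complex.exp (V * s₁ * s₂ * s₃) = 1) ∨
      (s₁ + s₂ + s₃ = 2 ∧ Complex.exp (V * s₁ * s₂ * s₃) = 1) ∨
      (s₁ + s₂ + s₃ = 3 ∧ Complex.exp (V * s₁ * s₂ * s₃) = Complex.exp V) := by
    rcases hs₁ with rfl | rfl <;> rcases hs₂ with rfl | rfl <;> rcases hs₃ with rfl | rfl <;>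
      norm_num
  · rw [hp, hk, eC, pA0, pw0 _ _ _ ey, pw0 _ _ _ ev, pw0 _ _ _ ez]
    linear_combination -h0
  · rw [hp, hk, eC, pA1, pw1 _ _ _ _ eI ey, pw1 _ _ _ _ em ev, pw1 _ _ _ _ emI ez]
    linear_combination -h1
  · rw [hp, hk, eC, pA2, pw2 _ _ _ _ _ eI hII ey, pw2 _ _ _ _ _ em hmm ev,
      pw2 _ _ _ _ _ emI hmII ez]
    linear_combination -h2
  · rw [hp, hk, eC, pA3, pw3 _ _ _ _ _ eI hI3 ey, pw3 _ _ _ _ _ em hm3 ev,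
      pw3 _ _ _ _ _ emI hmI3 ez]
    linear_combination -h3

theorem stmt14 (V : ℂ) :
    ∃ (W : Fin 3 → Fin 5 → ℂ) (a : Fin 3 → ℂ) (b : Fin 5 → ℂ) (c : ℂ),
      ∀ s₁ s₂ s₃ : ℂ, s₁ ∈ ({0, 1} : Set ℂ) → s₂ ∈ ({0, 1} : Set ℂ) →
        s₃ ∈ ({0, 1} : Set ℂ) →
        Complex.exp (V * s₁ * s₂ * s₃) =
          Complex.exp c * ∑ h : Fin 5 → Bool,
            Complex.exp (
              (W 0 0 * s₁ + W 1 0 * s₂ + W 2 0 * s₃) * spinVal (h 0) +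
              (W 0 1 * s₁ + W 1 1 * s₂ + W 2 1 * s₃) * spinVal (h 1) +
              (W 0 2 * s₁ + W 1 2 * s₂ + W 2 2 * s₃) * spinVal (h 2) +
              (W 0 3 * s₁ + W 1 3 * s₂ + W 2 3 * s₃) * spinVal (h 3) +
              (W 0 4 * s₁ + W 1 4 * s₂ + W 2 4 * s₃) * spinVal (h 4) +
              a 0 * s₁ + a 1 * s₂ + a 2 * s₃ + ∑ j, b j * spinVal (h j)) := by
  by_cases hE1 : Complex.exp V = 1
  · -- `exp V = 1` : use the `√7` solution
    set rc : ℂ := ((Real.sqrt 7 : ℝ) : ℂ) with hrc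
    have hr : rc ^ 2 = 7 := by
      rw [hrc, ← Complex.ofReal_pow, Real.sq_sqrt (by norm_num : (0:ℝ) ≤ 7)]
      norm_num
    have h5 : (5 : ℂ) - rc ≠ 0 := by
      intro h
      have h' : rc = 5 := by linear_combination -h
      rw [h'] at hr
      norm_num at hr
    refine key V (1/2) ((15 + 3 * rc) / 8) ((-1 + Complex.I) * (5 - rc) / 6) (-1/3)
      ((-1 - Complex.I) * (5 - rc) / 6) (by norm_num) ?_ (by norm_num) ?_ ?_ ?_ ?_ ?_ ?_
    · exact div_ne_zero (mul_ne_zero (by norm_num [Complex.ext_iff]) h5) (by norm_num)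
    · exact div_ne_zero (mul_ne_zero (by norm_num [Complex.ext_iff]) h5) (by norm_num)
    · intro h
      have h' : rc = -5 := by linear_combination (8/3 : ℂ) * h
      rw [h'] at hr
      norm_num at hr
    · linear_combination ((1/72) + (1/72)*rc) * hr + ((-125/144) + (25/144)*rc + (5/144)*rc^2 +
        (-1/144)*rc^3) * Complex.I_mul_I
    · linear_combination ((1/72) + (1/72)*rc) * hr + ((25/72) + (25/72)*rc + (-1/72)*rc^2 +
        (-1/72)*rc^3 + (125/144)*Complex.I^2 + (-25/144)*Complex.I^2*rc +
        (-5/144)*Complex.I^2*rc^2 + (1/144)*Complex.I^2*rc^3) * Complex.I_mul_I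
    · linear_combination ((-11/288) + (1/288)*rc) * hr + ((-125/576) + (25/576)*rc +
        (5/576)*rc^2 + (-1/576)*rc^3) * Complex.I_mul_I
    · rw [hE1]
      linear_combination ((-11/288) + (1/288)*rc) * hr + ((-275/288) + (25/288)*rc +
        (11/288)*rc^2 + (-1/288)*rc^3 + (125/576)*Complex.I^2 + (-25/576)*Complex.I^2*rc +
        (-5/576)*Complex.I^2*rc^2 + (1/576)*Complex.I^2*rc^3) * Complex.I_mul_I
  by_cases hEm1 : Complex.exp V = -1
  · -- `exp V = -1` : use the `√481` solution
    set rc : ℂ := ((Real.sqrt 481 : ℝ) : ℂ) with hrc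
    have hr : rc ^ 2 = 481 := by
      rw [hrc, ← Complex.ofReal_pow, Real.sq_sqrt (by norm_num : (0:ℝ) ≤ 481)]
      norm_num
    refine key V (1/2) ((-15 + Complex.I * rc) / 120)
      ((-135 - 25*rc + (375 - 9*rc) * Complex.I) / 706) (-11)
      ((-135 + 25*rc - (375 + 9*rc) * Complex.I) / 706)
      (by norm_num) ?_ (by norm_num) ?_ ?_ ?_ ?_ ?_ ?_
    · intro h
      have hw : (9 : ℂ) - 25 * Complex.I = 0 := by
        linear_combination (-15 + Complex.I*rc) * h - ((9/706) + (-25/706)*Complex.I) * hr -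
          ((375/706)*rc + (-9/706)*rc^2) * Complex.I_mul_I
      simp [Complex.ext_iff] at hw
    · intro h
      have hw : (9 : ℂ) + 25 * Complex.I = 0 := by
        linear_combination (-15 + Complex.I*rc) * h - ((9/706) + (25/706)*Complex.I) * hr -
          ((-375/706)*rc + (-9/706)*rc^2) * Complex.I_mul_I
      simp [Complex.ext_iff] at hw
    · intro h
      have h2 : Complex.I * rc = 15 := by linear_combination (120 : ℂ) * h
      have h3 : rc ^ 2 = -225 := by
        linear_combination (-(Complex.I*rc + 15)) * h2 + rc^2 * Complex.I_mul_I
      rw [hr] at h3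
      norm_num at h3
    · linear_combination ((-1/2824) + (1/8472)*Complex.I*rc) * hr + ((-703125/1993744) +
        (-2419/1993744)*rc^2 + (46875/1993744)*Complex.I*rc +
        (-27/1993744)*Complex.I*rc^3) * Complex.I_mul_I
    · linear_combination ((7/2824) + (-1/14120)*Complex.I*rc) * hr + ((-1575/2824) +
        (-7/2824)*rc^2 + (195/2824)*Complex.I*rc + (1/14120)*Complex.I*rc^3 +
        (-421875/1993744)*Complex.I^2 + (-3993/1993744)*Complex.I^2*rc^2 +
        (28125/1993744)*Complex.I^3*rc + (-81/9968720)*Complex.I^3*rc^3) * Complex.I_mul_I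
    · linear_combination ((11/11296) + (1/33888)*Complex.I*rc) * hr + ((-703125/7974976) +
        (-10891/7974976)*rc^2 + (46875/7974976)*Complex.I*rc +
        (-27/7974976)*Complex.I*rc^3) * Complex.I_mul_I
    · rw [hEm1]
      linear_combination ((-13/11296) + (-1/56480)*Complex.I*rc) * hr + ((2925/11296) +
        (13/11296)*rc^2 + (-105/11296)*Complex.I*rc + (1/56480)*Complex.I*rc^3 +
        (-421875/7974976)*Complex.I^2 + (-3993/7974976)*Complex.I^2*rc^2 +
        (28125/7974976)*Complex.I^3*rc + (-81/39874880)*Complex.I^3*rc^3) * Complex.I_mul_I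
  by_cases hEm3 : Complex.exp V = -3
  · -- `exp V = -3` : use the `√2289` solution
    set rc : ℂ := ((Real.sqrt 2289 : ℝ) : ℂ) with hrc
    have hr : rc ^ 2 = 2289 := by
      rw [hrc, ← Complex.ofReal_pow, Real.sq_sqrt (by norm_num : (0:ℝ) ≤ 2289)]
      norm_num
    refine key V (1/2) ((-935 + 17 * Complex.I * rc) / 440)
      ((-1815 - 65*rc + (3575 - 33*rc) * Complex.I) / 5314) (-27/17)
      ((-1815 + 65*rc + (-3575 - 33*rc) * Complex.I) / 5314)
      (by norm_num) ?_ (by norm_num) ?_ ?_ ?_ ?_ ?_ ?_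
    · intro h
      have hw : (33 : ℂ) - 65 * Complex.I = 0 := by
        linear_combination (-55 + Complex.I*rc) * h - ((33/5314) + (-65/5314)*Complex.I) * hr -
          ((3575/5314)*rc + (-33/5314)*rc^2) * Complex.I_mul_I
      simp [Complex.ext_iff] at hw
    · intro h
      have hw : (33 : ℂ) + 65 * Complex.I = 0 := by
        linear_combination (-55 + Complex.I*rc) * h - ((33/5314) + (65/5314)*Complex.I) * hr -
          ((-3575/5314)*rc + (-33/5314)*rc^2) * Complex.I_mul_I
      simp [Complex.ext_iff] at hw
    · intro h
      have h2 : Complex.I * rc = 55 := by linear_combination (440/17 : ℂ) * h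
      have h3 : rc ^ 2 = -3025 := by
        linear_combination (-(Complex.I*rc + 55)) * h2 + rc^2 * Complex.I_mul_I
      rw [hr] at h3
      norm_num at h3
    · linear_combination ((-1/21256) + (1/233816)*Complex.I*rc) * hr + ((-63903125/112954384) +
        (-15811/112954384)*rc^2 + (1161875/112954384)*Complex.I*rc +
        (-99/112954384)*Complex.I*rc^3) * Complex.I_mul_I
    · linear_combination ((15/21256) + (-1/106280)*Complex.I*rc) * hr + ((-45375/21256) +
        (-15/21256)*rc^2 + (2035/21256)*Complex.I*rc + (1/106280)*Complex.I*rc^3 +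
        (-140586875/112954384)*Complex.I^2 + (-104929/112954384)*Complex.I^2*rc^2 +
        (2556125/112954384)*Complex.I^3*rc + (-1089/564771920)*Complex.I^3*rc^3) * Complex.I_mul_I
    · linear_combination ((11/85024) + (1/935264)*Complex.I*rc) * hr + ((-63903125/451817536) +
        (-79579/451817536)*rc^2 + (1161875/451817536)*Complex.I*rc +
        (-99/451817536)*Complex.I*rc^3) * Complex.I_mul_I
    · rw [hEm3]
      linear_combination ((-37/85024) + (-1/425120)*Complex.I*rc) * hr + ((111925/85024) +
        (37/85024)*rc^2 + (-825/85024)*Complex.I*rc + (1/425120)*Complex.I*rc^3 +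
        (-140586875/451817536)*Complex.I^2 + (-104929/451817536)*Complex.I^2*rc^2 +
        (2556125/451817536)*Complex.I^3*rc + (-1089/2259087680)*Complex.I^3*rc^3) *
        Complex.I_mul_I
  · -- generic case
    set g : ℂ := Complex.exp (V / 2) with hg
    have hgg : g * g = Complex.exp V := by
      rw [hg, ← Complex.exp_add, show V / 2 + V / 2 = V by ring]
    have hg1 : g - 1 ≠ 0 := by
      intro h
      apply hE1
      have h' : g = 1 := by linear_combination h
      rw [← hgg, h']; norm_num
    have hg2 : 1 + g ≠ 0 := by
      intro h
      apply hE1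
      have h' : g = -1 := by linear_combination h
      rw [← hgg, h']; norm_num
    have hq1 : g * g + 1 ≠ 0 := by
      intro h
      apply hEm1
      rw [← hgg]
      linear_combination h
    have hq3 : 3 + g * g ≠ 0 := by
      intro h
      apply hEm3
      rw [← hgg]
      linear_combination h
    have h1mgg : 1 - g * g ≠ 0 := by
      intro h
      apply hE1
      rw [← hgg]
      linear_combination -h
    set u : ℂ := (1 + g) / (g - 1) with hu
    set v : ℂ := (1 - g * g) / (3 + g * g) with hv
    set C : ℂ := (3 + g * g) * (g - 1) ^ 2 / (8 * (g * g + 1)) with hC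
    have hune : u ≠ 0 := div_ne_zero hg2 hg1
    have hq1' : 1 + g ^ 2 ≠ 0 := by rw [sq, add_comm]; exact hq1
    have hq1'' : g ^ 2 + 1 ≠ 0 := by rw [sq]; exact hq1
    have hq3' : 3 + g ^ 2 ≠ 0 := by rw [sq]; exact hq3
    have hq3'' : g ^ 2 + 3 ≠ 0 := by rw [sq, add_comm]; exact hq3
    refine key V 1 C (Complex.I * u) v (-(Complex.I * u)) one_ne_zero
      (mul_ne_zero Complex.I_ne_zero hune) (div_ne_zero h1mgg hq3)
      (neg_ne_zero.mpr (mul_ne_zero Complex.I_ne_zero hune))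
      (div_ne_zero (mul_ne_zero hq3 (pow_ne_zero 2 hg1)) (mul_ne_zero (by norm_num) hq1))
      ?_ ?_ ?_ ?_
    · rw [show (1 + Complex.I * u) * (1 + v) * (1 + -(Complex.I * u)) = (1 + u * u) * (1 + v)
        from by linear_combination (-(1 + v) * u * u) * Complex.I_mul_I, hu, hv, hC]
      field_simp
      ring
    · rw [show (1 + Complex.I * (Complex.I * u)) = 1 - u
        from by linear_combination u * Complex.I_mul_I,
        show (1 - Complex.I * (-(Complex.I * u))) = 1 - u
        from by linear_combination u * Complex.I_mul_I, hu, hv, hC]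
      field_simp
      ring
    · rw [show (1 - Complex.I * u) * (1 + v) * (1 - -(Complex.I * u)) = (1 + u * u) * (1 + v)
        from by linear_combination (-(1 + v) * u * u) * Complex.I_mul_I, hu, hv, hC]
      field_simp
      ring
    · rw [show (1 - Complex.I * (Complex.I * u)) = 1 + u
        from by linear_combination (-u) * Complex.I_mul_I,
        show (1 + Complex.I * (-(Complex.I * u))) = 1 + u
        from by linear_combination (-u) * Complex.I_mul_I, ← hgg, hu, hv, hC]
      field_simp
      ring
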